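/- Any totally ordered group endowed with the order topology is a topological group: multiplication is jointly continuous and inversion is continuous. -/

import Mathlib

open Filter Topology Set Function

section Aux

variable {G : Type*} [Group G] [LinearOrder G]
    [CovariantClass G G (· * ·) (· ≤ ·)]
    [CovariantClass G G (Function.swap (· * ·)) (· ≤ ·)]
    [TopologicalSpace G] [OrderTopology G]

private lemma aux_upper (c : G) (hc : 1 < c) :
    ∀ᶠ p : G × G in 𝓝 1 ×ˢ 𝓝 1, p.1 * p.2 < c := by
  rcases dense_or_discrete (1 : G) c with ⟨d, hd1, hdc⟩ | ⟨h1, h2⟩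
  · have hdc' : (1 : G) < d⁻¹ * c := by
      have := mul_lt_mul_right hdc d⁻¹
      rwa [inv_mul_cancel] at this
    filter_upwards [prod_mem_prod (Iio_mem_nhds hd1) (Iio_mem_nhds hdc')] with p hp
    calc p.1 * p.2 < d * p.2 := mul_lt_mul_left hp.1 _
      _ < d * (d⁻¹ * c) := mul_lt_mul_right hp.2 _
      _ = c := by rw [mul_inv_cancel_left]
  · have hsing : Ioo (c⁻¹) c = {(1 : G)} := by
      ext z
      simp only [mem_Ioo, mem_singleton_iff]
      constructor
      · rintro ⟨hz1, hz2⟩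
        have h1z : z ≤ 1 := h2 z hz2
        have : z⁻¹ < c := inv_lt'.mpr hz1
        have h2z : (1 : G) ≤ z := by
          have := h2 z⁻¹ this
          rwa [inv_le_one'] at this
        exact le_antisymm h1z h2z
      · rintro rfl
        exact ⟨inv_lt_one'.mpr hc, hc⟩
    have hmem : {(1 : G)} ∈ 𝓝 (1 : G) := by
      rw [← hsing]; exact Ioo_mem_nhds (inv_lt_one'.mpr hc) hc
    filter_upwards [prod_mem_prod hmem hmem] with p hp
    rcases hp with ⟨hp1, hp2⟩
    simp only [mem_singleton_iff] at hp1 hp2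
    rw [hp1, hp2, one_mul]; exact hc

private lemma aux_lower (l : G) (hl : l < 1) :
    ∀ᶠ p : G × G in 𝓝 1 ×ˢ 𝓝 1, l < p.1 * p.2 := by
  rcases dense_or_discrete l (1 : G) with ⟨d, hld, hd1⟩ | ⟨h1, h2⟩
  · have hld' : d⁻¹ * l < 1 := by
      have := mul_lt_mul_right hld d⁻¹
      rwa [inv_mul_cancel] at this
    filter_upwards [prod_mem_prod (Ioi_mem_nhds hd1) (Ioi_mem_nhds hld')] with p hp
    calc l = d * (d⁻¹ * l) := by rw [mul_inv_cancel_left]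
      _ < d * p.2 := mul_lt_mul_right hp.2 _
      _ < p.1 * p.2 := mul_lt_mul_left hp.1 _
  · have hsing : Ioo l l⁻¹ = {(1 : G)} := by
      ext z
      simp only [mem_Ioo, mem_singleton_iff]
      constructor
      · rintro ⟨hz1, hz2⟩
        have h1z : 1 ≤ z := h1 z hz1
        have : l < z⁻¹ := lt_inv'.mpr hz2
        have h2z : z ≤ 1 := by
          have := h1 z⁻¹ this
          rwa [one_le_inv'] at this
        exact le_antisymm h2z h1z
      · rintro rfl
        exact ⟨hl, one_lt_inv_of_inv hl⟩
    have hmem : {(1 : G)} ∈ 𝓝 (1 : G) := by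
      rw [← hsing]; exact Ioo_mem_nhds hl (one_lt_inv_of_inv hl)
    filter_upwards [prod_mem_prod hmem hmem] with p hp
    rcases hp with ⟨hp1, hp2⟩
    simp only [mem_singleton_iff] at hp1 hp2
    rw [hp1, hp2, one_mul]; exact hl

private lemma aux_mul_one : ContinuousAt (fun p : G × G => p.1 * p.2) (1, 1) := by
  unfold ContinuousAt
  rw [nhds_prod_eq]
  simp only [one_mul]
  exact tendsto_order.2 ⟨fun l hl => aux_lower l hl, fun c hc => aux_upper c hc⟩

end Aux

/-- Any totally ordered group endowed with the order topology is a topological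
group: multiplication is jointly continuous and inversion is continuous. -/
theorem stmt_3 {G : Type*} [Group G] [LinearOrder G]
    [CovariantClass G G (· * ·) (· ≤ ·)]
    [CovariantClass G G (Function.swap (· * ·)) (· ≤ ·)]
    [TopologicalSpace G] [OrderTopology G] :
    IsTopologicalGroup G := by
  have hL : ∀ a : G, Continuous (fun x : G => a * x) := fun a =>
    (OrderIso.mulLeft a).toHomeomorph.continuous
  have hR : ∀ b : G, Continuous (fun x : G => x * b) := fun b =>
    (OrderIso.mulRight b).toHomeomorph.continuous
  refine { continuous_mul := ?_, continuous_inv := ?_ }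
  · refine continuous_iff_continuousAt.2 ?_
    rintro ⟨a, b⟩
    have key : (fun p : G × G => p.1 * p.2) =
        (fun z : G => a * z * b) ∘ (fun p : G × G => p.1 * p.2) ∘
          (fun p : G × G => (a⁻¹ * p.1, p.2 * b⁻¹)) := by
      funext p
      simp [mul_assoc]
    rw [key]
    have h1 : ContinuousAt (fun p : G × G => (a⁻¹ * p.1, p.2 * b⁻¹)) (a, b) :=
      (((hL a⁻¹).comp continuous_fst).prodMk ((hR b⁻¹).comp continuous_snd)).continuousAt
    have h3 : Continuous (fun z : G => a * z * b) := (hR b).comp (hL a)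
    refine ContinuousAt.comp h3.continuousAt ?_
    refine ContinuousAt.comp ?_ h1
    simpa using aux_mul_one
  · have : Continuous (OrderDual.ofDual (α := G) ∘ (OrderIso.inv G)) :=
      continuous_ofDual.comp (OrderIso.inv G).toHomeomorph.continuous
    exact this
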